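/- In a coherent relational monoid, D(x,y) holds if and only if r x = ℓ y, and if and only if there exists a unit e with D(x,e) and D(e,y). -/
import Mathlib


/-- Relational associativity. -/
def RelAssoc {X : Type*} (R : X → X → X → Prop) : Prop :=
  ∀ u x y z : X, (∃ v, R u x v ∧ R v y z) ↔ (∃ v, R u v z ∧ R v x y)

/-- Definedness: `D R x y` iff the composite of `x` and `y` exists. -/
def D {X : Type*} (R : X → X → X → Prop) (x y : X) : Prop := ∃ z, R z x y

/-- Relational left unit. -/
def IsLUnit {X : Type*} (R : X → X → X → Prop) (e : X) : Prop :=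
  (∃ x, R x e x) ∧ ∀ x y, R y e x → y = x

/-- Relational right unit. -/
def IsRUnit {X : Type*} (R : X → X → X → Prop) (e : X) : Prop :=
  (∃ x, R x x e) ∧ ∀ x y, R y x e → y = x

/-- Relational unit: a left or a right unit. -/
def IsUnit' {X : Type*} (R : X → X → X → Prop) (e : X) : Prop :=
  IsLUnit R e ∨ IsRUnit R e

/-- Relational monoid: relationally associative, and every element has a left
unit composable on the left and a right unit composable on the right. -/
def RelMonoid {X : Type*} (R : X → X → X → Prop) : Prop :=
  RelAssoc R ∧ ∀ x, (∃ e, IsLUnit R e ∧ D R e x) ∧ (∃ e, IsRUnit R e ∧ D R x e)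

/-- Coherence. -/
def Coherent {X : Type*} (R : X → X → X → Prop) : Prop :=
  ∀ v x y z, R v x y → D R y z → D R v z

/-- Weak functionality: `R` is a partial operation. -/
def WFun {X : Type*} (R : X → X → X → Prop) : Prop :=
  ∀ x x' y z, R x y z → R x' y z → x = x'

theorem stmt12 {X : Type*} (R : X → X → X → Prop) (hM : RelMonoid R)
    (hC : Coherent R) (l r : X → X)
    (hl : ∀ x, IsUnit' R (l x) ∧ R x (l x) x)
    (hr : ∀ x, IsUnit' R (r x) ∧ R x x (r x)) :
    ∀ x y : X, (D R x y ↔ r x = l y) ∧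
      (D R x y ↔ ∃ e, IsUnit' R e ∧ D R x e ∧ D R e y) := by
  obtain ⟨hA, hU⟩ := hM
  -- Every unit is two-sided.
  have two : ∀ e, IsUnit' R e → IsLUnit R e ∧ IsRUnit R e := by
    intro e he
    rcases he with hL | hR
    · refine ⟨hL, ?_⟩
      obtain ⟨e', hRU, t, ht⟩ := (hU e).2
      have h1 : t = e' := hL.2 e' t ht
      subst h1
      have h2 : t = e := hRU.2 e t ht
      exact h2 ▸ hRU
    · refine ⟨?_, hR⟩
      obtain ⟨e', hLU, t, ht⟩ := (hU e).1
      have h1 : t = e := hLU.2 e t ht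
      subst h1
      have h2 : t = e' := hR.2 e' t ht
      exact h2 ▸ hLU
  intro x y
  -- key step: if D x y then R x x (l y)
  have key : D R x y → R x x (l y) := by
    rintro ⟨v, hv⟩
    obtain ⟨w, hw1, hw2⟩ := (hA v x (l y) y).mp ⟨y, hv, (hl y).2⟩
    have hwx : w = x := (two (l y) (hl y).1).2.2 x w hw2
    exact hwx ▸ hw2
  -- forward: D x y → r x = l y
  have fwd : D R x y → r x = l y := by
    intro hD
    have hxly : R x x (l y) := key hD
    obtain ⟨w', hw'1, hw'2⟩ := (hA x x (l y) (r x)).mpr ⟨x, (hr x).2, hxly⟩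
    have h1 : w' = r x := (two (l y) (hl y).1).1.2 (r x) w' hw'2
    exact (two (r x) (hr x).1).2.2 (l y) (r x) (h1 ▸ hw'2)
  constructor
  · constructor
    · exact fwd
    · intro h
      have hx : R x x (l y) := h ▸ (hr x).2
      exact hC x x (l y) y hx ⟨y, (hl y).2⟩
  · constructor
    · intro hD
      exact ⟨r x, (hr x).1, ⟨x, (hr x).2⟩, fwd hD ▸ ⟨y, (hl y).2⟩⟩
    · rintro ⟨e, he, ⟨w, hw⟩, hey⟩
      have hwx : w = x := (two e he).2.2 x w hw
      exact hC x x e y (hwx ▸ hw) hey
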